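/- Let Δ ⊂ ℂˣ × ℤ^r be a finite set with (1,0) ∉ Δ, and set d = ∏_{(a,χ)∈Δ} (1 − a·e^χ) ∈ A, a nonzero element. For each subset S ⊆ Δ whose projection to ℤ^r consists of linearly independent vectors, set d_S = ∏_{(a,χ)∈S} (1 − a·e^χ) (with d_∅ = 1). Then for every f ∈ A and every n ∈ ℕ, the element f/d^n of the fraction field K can be written as a finite sum Σ_j g_j / d_{S_j}^{n_j}, where each S_j ⊆ Δ has linearly independent projection to ℤ^r, g_j ∈ A, and n_j ∈ ℕ. (Corollary to Proposition 3.2: R = R_r, i.e. the localization A[d^{-1}] equals Σ_S A[d_S^{-1}].) -/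

import Mathlib

/-- The Laurent polynomial ring `A = ℂ[ℤ^r]`, with basis elements `e^ψ`, `ψ ∈ ℤ^r`. -/
abbrev LaurentA (r : ℕ) : Type := AddMonoidAlgebra ℂ (Fin r → ℤ)

noncomputable instance {r : ℕ} : IsDomain (LaurentA r) := NoZeroDivisors.to_isDomain _


open Finset

section Aux
variable {R : Type*} [CommRing R]

lemma one_sub_pow_eq (x : R) (n : ℕ) :
    1 - x ^ n = (1 - x) * ∑ i ∈ Finset.range n, x ^ i := by
  have h := geom_sum_mul x n
  linear_combination h

lemma unit_one_sub_zpow (v : Rˣ) (k : ℤ) :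
    ∃ h : R, 1 - ((v ^ k : Rˣ) : R) = (1 - (v : R)) * h := by
  obtain ⟨n, hn | hn⟩ := k.eq_nat_or_neg
  · subst hn
    refine ⟨∑ i ∈ Finset.range n, (v : R) ^ i, ?_⟩
    rw [zpow_natCast, Units.val_pow_eq_pow_val, one_sub_pow_eq]
  · subst hn
    refine ⟨-((((v ^ n)⁻¹ : Rˣ) : R)) * ∑ i ∈ Finset.range n, (v : R) ^ i, ?_⟩
    have h1 : ((v ^ (-(n:ℤ)) : Rˣ) : R) = (((v ^ n)⁻¹ : Rˣ) : R) := by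
      rw [zpow_neg, zpow_natCast]
    have h2 : (((v ^ n)⁻¹ : Rˣ) : R) * ((v ^ n : Rˣ) : R) = 1 := by
      rw [← Units.val_mul, inv_mul_cancel, Units.val_one]
    have h3 : ((v ^ n : Rˣ) : R) = (v : R) ^ n := Units.val_pow_eq_pow_val v n
    have h4 := one_sub_pow_eq (v : R) n
    rw [h1]
    have h5 : 1 - (((v ^ n)⁻¹ : Rˣ) : R)
        = (((v ^ n)⁻¹ : Rˣ) : R) * (((v ^ n : Rˣ) : R) - 1) := by
      rw [mul_sub, h2, mul_one]
    rw [h5, h3]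
    linear_combination (-(((v ^ n)⁻¹ : Rˣ) : R)) * h4

lemma one_sub_prod_zpow {ι : Type*} [DecidableEq ι] (s : Finset ι) (v : ι → Rˣ) (m : ι → ℤ) :
    ∃ h : ι → R, 1 - ((∏ p ∈ s, v p ^ m p : Rˣ) : R) = ∑ p ∈ s, (1 - (v p : R)) * h p := by
  induction s using Finset.induction_on with
  | empty => exact ⟨0, by simp⟩
  | insert q s' hq ih =>
    obtain ⟨h, hh⟩ := ih
    obtain ⟨h0, hh0⟩ := unit_one_sub_zpow (v q) (m q)
    refine ⟨fun p => if p = q then h0 * ((∏ p ∈ s', v p ^ m p : Rˣ) : R) else h p, ?_⟩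
    rw [Finset.prod_insert hq, Finset.sum_insert hq]
    have hv : ((v q ^ m q * ∏ p ∈ s', v p ^ m p : Rˣ) : R)
        = ((v q ^ m q : Rˣ) : R) * ((∏ p ∈ s', v p ^ m p : Rˣ) : R) := Units.val_mul _ _
    rw [hv]
    simp only [eq_self_iff_true, if_true]
    have hsum : ∑ p ∈ s', (1 - (v p : R)) * (if p = q then h0 * ((∏ p ∈ s', v p ^ m p : Rˣ) : R) else h p)
        = ∑ p ∈ s', (1 - (v p : R)) * h p := by
      apply Finset.sum_congr rfl
      intro p hp
      rw [if_neg (by rintro rfl; exact hq hp)]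
    rw [hsum, ← hh]
    linear_combination ((∏ p ∈ s', v p ^ m p : Rˣ) : R) * hh0

end Aux

namespace Stmt4Aux

noncomputable def mono {r : ℕ} (a : ℂˣ) (χ : Fin r → ℤ) : (LaurentA r)ˣ where
  val := AddMonoidAlgebra.single χ (a : ℂ)
  inv := AddMonoidAlgebra.single (-χ) ((a⁻¹ : ℂˣ) : ℂ)
  val_inv := by
    rw [AddMonoidAlgebra.single_mul_single, add_neg_cancel, ← Units.val_mul, mul_inv_cancel,
      Units.val_one, AddMonoidAlgebra.one_def]
  inv_val := by
    rw [AddMonoidAlgebra.single_mul_single, neg_add_cancel, ← Units.val_mul, inv_mul_cancel,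
      Units.val_one, AddMonoidAlgebra.one_def]

@[simp] lemma mono_val {r : ℕ} (a : ℂˣ) (χ : Fin r → ℤ) :
    ((mono a χ : (LaurentA r)ˣ) : LaurentA r) = AddMonoidAlgebra.single χ (a : ℂ) := rfl

lemma mono_mul {r : ℕ} (a a' : ℂˣ) (χ χ' : Fin r → ℤ) :
    (mono a χ) * (mono a' χ') = mono (a * a') (χ + χ') := by
  ext
  rw [Units.val_mul, mono_val, mono_val, mono_val, AddMonoidAlgebra.single_mul_single,
    Units.val_mul]

lemma mono_one {r : ℕ} : (mono 1 0 : (LaurentA r)ˣ) = 1 := by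
  apply Units.ext
  simp [AddMonoidAlgebra.one_def]

lemma mono_inv {r : ℕ} (a : ℂˣ) (χ : Fin r → ℤ) :
    (mono a χ : (LaurentA r)ˣ)⁻¹ = mono a⁻¹ (-χ) := by
  apply inv_eq_of_mul_eq_one_right
  rw [mono_mul, mul_inv_cancel, add_neg_cancel, mono_one]

lemma mono_zpow {r : ℕ} (a : ℂˣ) (χ : Fin r → ℤ) (k : ℤ) :
    (mono a χ : (LaurentA r)ˣ) ^ k = mono (a ^ k) (k • χ) := by
  induction k using Int.induction_on with
  | zero => rw [zpow_zero, zpow_zero, zero_smul, mono_one]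
  | succ i ih =>
    have ha : a ^ (i : ℤ) * a = a ^ ((i : ℤ) + 1) := (zpow_add_one a i).symm
    have hχ : (i : ℤ) • χ + χ = ((i : ℤ) + 1) • χ := by rw [add_smul, one_smul]
    rw [zpow_add_one, ih, mono_mul, ha, hχ]
  | pred i ih =>
    have ha : a ^ (-(i : ℤ)) * a⁻¹ = a ^ (-(i : ℤ) - 1) := (zpow_sub_one a (-(i:ℤ))).symm
    have hχ : (-(i : ℤ)) • χ + -χ = (-(i : ℤ) - 1) • χ := by
      rw [sub_smul, one_smul, sub_eq_add_neg]
    rw [zpow_sub_one, ih, mono_inv, mono_mul, ha, hχ]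

lemma mono_prod_zpow {r : ℕ} {ι : Type*} (s : Finset ι) (a : ι → ℂˣ) (χ : ι → Fin r → ℤ)
    (m : ι → ℤ) :
    ∏ p ∈ s, (mono (a p) (χ p) : (LaurentA r)ˣ) ^ m p
      = mono (∏ p ∈ s, a p ^ m p) (∑ p ∈ s, m p • χ p) := by
  classical
  induction s using Finset.induction_on with
  | empty => simp [mono_one]
  | insert q s' hq ih =>
    rw [Finset.prod_insert hq, Finset.prod_insert hq, Finset.sum_insert hq, ih, mono_zpow,
      mono_mul]

end Stmt4Aux

namespace Stmt4Aux

open Finset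

section Main

variable {r : ℕ}

local notation "K" => FractionRing (LaurentA r)
local notation "φ" => algebraMap (LaurentA r) (FractionRing (LaurentA r))

noncomputable def uu (p : ℂˣ × (Fin r → ℤ)) : LaurentA r :=
  1 - AddMonoidAlgebra.single p.2 ((p.1 : ℂ))

lemma uu_eq_one_sub_mono (p : ℂˣ × (Fin r → ℤ)) :
    uu p = 1 - ((mono p.1 p.2 : (LaurentA r)ˣ) : LaurentA r) := rfl

variable (Δ : Finset (ℂˣ × (Fin r → ℤ)))

def Idx : Type _ := {x // x ∈ Δ}

noncomputable instance : Fintype (Idx Δ) := FinsetCoe.fintype Δ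
noncomputable instance : DecidableEq (Idx Δ) := Classical.decEq _

lemma uu_ne_zero (hΔ : ((1 : ℂˣ), (0 : Fin r → ℤ)) ∉ Δ) {p : ℂˣ × (Fin r → ℤ)}
    (hp : p ∈ Δ) : uu p ≠ 0 := by
  intro h
  have h1 : AddMonoidAlgebra.single p.2 ((p.1 : ℂ)) = (1 : LaurentA r) := by
    have := sub_eq_zero.mp h
    exact this.symm
  rw [AddMonoidAlgebra.one_def] at h1
  have h2 := AddMonoidAlgebra.single_inj.mp h1
  rcases h2 with ⟨hχ, ha⟩ | ⟨ha, h0⟩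
  · have hp1 : p.1 = 1 := Units.ext ha
    have : p = ((1 : ℂˣ), (0 : Fin r → ℤ)) := Prod.ext hp1 hχ
    rw [this] at hp
    exact hΔ hp
  · exact one_ne_zero h0

noncomputable def DD (n : Idx Δ → ℕ) : LaurentA r :=
  ∏ p : Idx Δ, (uu p.1) ^ (n p)

lemma DD_ne_zero (hΔ : ((1 : ℂˣ), (0 : Fin r → ℤ)) ∉ Δ) (n : Idx Δ → ℕ) : DD Δ n ≠ 0 := by
  apply Finset.prod_ne_zero_iff.mpr
  intro p _
  exact pow_ne_zero _ (uu_ne_zero Δ hΔ p.2)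

lemma phi_ne {x : LaurentA r} (hx : x ≠ 0) : φ x ≠ 0 :=
  (map_ne_zero_iff _ (IsFractionRing.injective (LaurentA r) K)).mpr hx

noncomputable def XX (n : Idx Δ → ℕ) : K := (φ (DD Δ n))⁻¹

open scoped Classical in
noncomputable def suppn (n : Idx Δ → ℕ) : Finset (Idx Δ) :=
  Finset.univ.filter (fun p => n p ≠ 0)

lemma mem_suppn_iff (n : Idx Δ → ℕ) (p : Idx Δ) : p ∈ suppn Δ n ↔ n p ≠ 0 := by
  classical
  simp [suppn]

def IndepS (S : Finset (ℂˣ × (Fin r → ℤ))) : Prop :=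
  LinearIndependent ℚ (fun (p : {x // x ∈ S}) (l : Fin r) => ((p.1.2 l : ℚ)))

noncomputable def MM : Submodule (LaurentA r) K :=
  Submodule.span _ {x : K | ∃ (S : Finset (ℂˣ × (Fin r → ℤ))) (e : ℕ), S ⊆ Δ ∧ IndepS S ∧
    x = ((φ (∏ p ∈ S, ((1 : LaurentA r) - AddMonoidAlgebra.single p.2 ((p.1 : ℂ))))) ^ e)⁻¹}

lemma MM_mul_mem (f : LaurentA r) {x : K} (hx : x ∈ MM Δ) : φ f * x ∈ MM Δ := by
  rw [← Algebra.smul_def]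
  exact Submodule.smul_mem _ _ hx

lemma DD_update (n : Idx Δ → ℕ) (p : Idx Δ) (v : ℕ) :
    DD Δ (Function.update n p v) = (uu p.1) ^ v * ∏ q ∈ Finset.univ.erase p, (uu q.1) ^ (n q) := by
  unfold DD
  have hfun : (fun q : Idx Δ => (uu q.1) ^ (Function.update n p v q))
      = Function.update (fun q : Idx Δ => (uu q.1) ^ (n q)) p ((uu p.1) ^ v) := by
    funext q
    by_cases hq : q = p
    · subst hq; simp
    · simp [Function.update_of_ne hq]
  rw [hfun, Finset.prod_update_of_mem (Finset.mem_univ p)]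
  rw [Finset.sdiff_singleton_eq_erase]

lemma DD_self_eq (n : Idx Δ → ℕ) (p : Idx Δ) :
    DD Δ n = (uu p.1) ^ (n p) * ∏ q ∈ Finset.univ.erase p, (uu q.1) ^ (n q) := by
  unfold DD
  exact (Finset.mul_prod_erase Finset.univ _ (Finset.mem_univ p)).symm

lemma XX_up (hΔ : ((1 : ℂˣ), (0 : Fin r → ℤ)) ∉ Δ) (n : Idx Δ → ℕ) (p : Idx Δ) :
    φ (uu p.1) * XX Δ (Function.update n p (n p + 1)) = XX Δ n := by
  have key : DD Δ (Function.update n p (n p + 1)) = uu p.1 * DD Δ n := by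
    rw [DD_update, DD_self_eq Δ n p, pow_succ']
    ring
  unfold XX
  rw [key, map_mul, mul_inv]
  rw [← mul_assoc, mul_inv_cancel₀ (phi_ne (uu_ne_zero Δ hΔ p.2)), one_mul]

lemma XX_down (hΔ : ((1 : ℂˣ), (0 : Fin r → ℤ)) ∉ Δ) (n : Idx Δ → ℕ) (p : Idx Δ)
    (h : n p ≠ 0) :
    φ (uu p.1) * XX Δ n = XX Δ (Function.update n p (n p - 1)) := by
  set n' := Function.update n p (n p - 1) with hn'
  have h1 : Function.update n' p (n' p + 1) = n := by
    funext q
    by_cases hq : q = p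
    · subst hq; simp [hn']; omega
    · simp [hn', Function.update_of_ne hq]
  have := XX_up Δ hΔ n' p
  rw [h1] at this
  exact this

end Main
end Stmt4Aux

namespace Stmt4Aux
open Finset
section Main
variable {r : ℕ} (Δ : Finset (ℂˣ × (Fin r → ℤ)))

local notation "K" => FractionRing (LaurentA r)
local notation "φ" => algebraMap (LaurentA r) (FractionRing (LaurentA r))

lemma indep_case (hΔ : ((1 : ℂˣ), (0 : Fin r → ℤ)) ∉ Δ) (n : Idx Δ → ℕ)
    (h : IndepS ((suppn Δ n).image Subtype.val)) : XX Δ n ∈ MM Δ := by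
  classical
  set T := suppn Δ n with hT
  set S := T.image Subtype.val with hS
  set e := ∑ p : Idx Δ, n p with he
  have hSΔ : S ⊆ Δ := by
    intro q hq
    rw [hS] at hq
    obtain ⟨p, _, rfl⟩ := Finset.mem_image.mp hq
    exact p.2
  have hinj : Set.InjOn Subtype.val (T : Set (Idx Δ)) := fun a _ b _ hab => Subtype.ext hab
  have hprod : ∏ q ∈ S, uu q = ∏ p ∈ T, uu p.1 := by
    rw [hS, Finset.prod_image (fun a ha b hb hab => hinj ha hb hab)]
    rfl
  have hnle : ∀ p ∈ T, n p ≤ e := by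
    intro p _
    exact Finset.single_le_sum (f := n) (fun q _ => Nat.zero_le _) (Finset.mem_univ p)
  have hDDT : DD Δ n = ∏ p ∈ T, (uu p.1) ^ (n p) := by
    unfold DD
    refine (Finset.prod_subset (Finset.subset_univ T) ?_).symm
    intro p _ hp
    rw [mem_suppn_iff] at hp
    push_neg at hp
    rw [hp, pow_zero]
  set k := ∏ p ∈ T, (uu p.1) ^ (e - n p) with hk
  have hA : (∏ q ∈ S, uu q) ^ e = DD Δ n * k := by
    rw [hprod, ← Finset.prod_pow, hDDT, hk, ← Finset.prod_mul_distrib]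
    apply Finset.prod_congr rfl
    intro p hp
    rw [← pow_add]
    congr 1
    have := hnle p hp
    omega
  have hkne : φ k ≠ 0 := by
    apply phi_ne
    rw [hk]
    apply Finset.prod_ne_zero_iff.mpr
    intro p _
    exact pow_ne_zero _ (uu_ne_zero Δ hΔ p.2)
  set gen : K := ((φ (∏ p ∈ S, ((1 : LaurentA r) - AddMonoidAlgebra.single p.2 ((p.1 : ℂ))))) ^ e)⁻¹ with hgen
  have hgen_mem : gen ∈ MM Δ := by
    apply Submodule.subset_span
    exact ⟨S, e, hSΔ, h, rfl⟩
  have hgenval : gen = (φ (DD Δ n * k))⁻¹ := by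
    rw [hgen, ← map_pow, ← hA]
    congr 2
  have hXX : XX Δ n = φ k * gen := by
    rw [hgenval, map_mul, mul_inv, ← mul_assoc, mul_comm (φ k), mul_assoc,
      mul_inv_cancel₀ hkne, mul_one]
    rfl
  rw [hXX, ← Algebra.smul_def]
  exact Submodule.smul_mem _ _ hgen_mem

end Main
end Stmt4Aux

namespace Stmt4Aux
open Finset
section Main
variable {r : ℕ} (Δ : Finset (ℂˣ × (Fin r → ℤ)))

lemma int_of_den_dvd (q : ℚ) (d : ℤ) (hd : (q.den : ℤ) ∣ d) :
    ((d / (q.den : ℤ) * q.num : ℤ) : ℚ) = (d : ℚ) * q := by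
  obtain ⟨c, hc⟩ := hd
  have hden0 : ((q.den : ℤ)) ≠ 0 := by exact_mod_cast q.den_nz
  have hdiv : d / (q.den : ℤ) = c := by rw [hc, Int.mul_ediv_cancel_left _ hden0]
  have hnum : ((q.den : ℚ)) * q = (q.num : ℚ) := by
    have hd : ((q.den : ℚ)) ≠ 0 := by exact_mod_cast q.den_nz
    nth_rewrite 2 [← Rat.num_div_den q]
    rw [mul_comm, div_mul_cancel₀ _ hd]
  rw [hdiv, hc]
  push_cast
  rw [mul_comm ((q.den : ℚ)) (c : ℚ), mul_assoc, hnum]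

lemma indep_transfer (T : Finset (Idx Δ))
    (h : LinearIndependent ℚ (fun (p : {p : Idx Δ // p ∈ T}) (l : Fin r) => ((p.1.1.2 l : ℚ)))) :
    IndepS (T.image Subtype.val) := by
  classical
  unfold IndepS
  have hsub : ∀ x : {x // x ∈ T.image Subtype.val}, x.1 ∈ Δ := by
    intro x
    obtain ⟨p, hp, hpx⟩ := Finset.mem_image.mp x.2
    exact hpx ▸ p.2
  have hmem : ∀ x : {x // x ∈ T.image Subtype.val}, (⟨x.1, hsub x⟩ : Idx Δ) ∈ T := by
    intro x
    obtain ⟨p, hp, hpx⟩ := Finset.mem_image.mp x.2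
    have heq : (⟨x.1, hsub x⟩ : Idx Δ) = p := Subtype.ext hpx.symm
    rw [heq]
    exact hp
  set f : {x // x ∈ T.image Subtype.val} → {p : Idx Δ // p ∈ T} := fun x =>
    ⟨⟨x.1, hsub x⟩, hmem x⟩ with hf
  have hinj : Function.Injective f := by
    intro a b hab
    apply Subtype.ext
    have := congrArg (fun z => z.1.1) hab
    exact this
  exact h.comp f hinj

lemma relation_of_dep (T : Finset (Idx Δ))
    (h : ¬ IndepS (T.image Subtype.val)) :
    ∃ m : Idx Δ → ℤ, (∀ p : Idx Δ, p ∉ T → m p = 0) ∧ (∃ p, m p ≠ 0) ∧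
      ∑ p : Idx Δ, m p • (p.1.2 : Fin r → ℤ) = 0 := by
  classical
  have hnLI : ¬ LinearIndependent ℚ
      (fun (p : {p : Idx Δ // p ∈ T}) (l : Fin r) => ((p.1.1.2 l : ℚ))) :=
    fun hLI => h (indep_transfer Δ T hLI)
  rw [Fintype.not_linearIndependent_iff] at hnLI
  obtain ⟨g, hg0, i0, hi0⟩ := hnLI
  set gq : Idx Δ → ℚ := fun p => if hp : p ∈ T then g ⟨p, hp⟩ else 0 with hgq
  set D : ℤ := ∏ i : {p : Idx Δ // p ∈ T}, ((g i).den : ℤ) with hD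
  have hD0 : D ≠ 0 := by
    rw [hD]
    apply Finset.prod_ne_zero_iff.mpr
    intro i _
    exact_mod_cast (g i).den_nz
  have hdvd : ∀ p : Idx Δ, ((gq p).den : ℤ) ∣ D := by
    intro p
    by_cases hp : p ∈ T
    · rw [hgq]
      simp only [dif_pos hp]
      rw [hD]
      exact Finset.dvd_prod_of_mem _ (Finset.mem_univ (⟨p, hp⟩ : {p : Idx Δ // p ∈ T}))
    · rw [hgq]
      simp only [dif_neg hp]
      simp
  set m : Idx Δ → ℤ := fun p => (D / ((gq p).den : ℤ)) * (gq p).num with hm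
  have hkey : ∀ p : Idx Δ, ((m p : ℤ) : ℚ) = (D : ℚ) * gq p := by
    intro p
    rw [hm]
    exact int_of_den_dvd (gq p) D (hdvd p)
  refine ⟨m, ?_, ?_, ?_⟩
  · intro p hp
    rw [hm]
    simp only []
    rw [hgq]
    simp [dif_neg hp]
  · refine ⟨i0.1, ?_⟩
    intro hzero
    have h1 : ((m i0.1 : ℤ) : ℚ) = 0 := by rw [hzero]; norm_num
    rw [hkey] at h1
    have hgqi : gq i0.1 = g i0 := by
      rw [hgq]
      simp only [dif_pos i0.2]
    rw [hgqi] at h1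
    rcases mul_eq_zero.mp h1 with hD' | hg'
    · exact hD0 (by exact_mod_cast hD')
    · exact hi0 hg'
  · funext l
    have hcoord : ∀ i : {p : Idx Δ // p ∈ T}, ∑ i : {p : Idx Δ // p ∈ T}, g i * ((i.1.1.2 l : ℚ)) = 0 := by
      intro _
      have := congrFun hg0 l
      simpa [Finset.sum_apply] using this
    have hsum0 : ∑ i : {p : Idx Δ // p ∈ T}, g i * ((i.1.1.2 l : ℚ)) = 0 := hcoord i0
    have hQ : ((∑ p : Idx Δ, m p • (p.1.2 : Fin r → ℤ)) l : ℚ) = 0 := by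
      have h1 : ((∑ p : Idx Δ, m p • (p.1.2 : Fin r → ℤ)) l : ℚ)
          = ∑ p : Idx Δ, ((m p : ℚ)) * ((p.1.2 l : ℚ)) := by
        rw [Finset.sum_apply]
        push_cast
        apply Finset.sum_congr rfl
        intro p _
        simp [smul_eq_mul]
      rw [h1]
      have h2 : ∀ p : Idx Δ, ((m p : ℚ)) * ((p.1.2 l : ℚ)) = (D : ℚ) * (gq p * ((p.1.2 l : ℚ))) := by
        intro p
        rw [hkey p]
        ring
      rw [Finset.sum_congr rfl (fun p _ => h2 p), ← Finset.mul_sum]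
      have h3 : ∑ p : Idx Δ, gq p * ((p.1.2 l : ℚ)) = ∑ p ∈ T, gq p * ((p.1.2 l : ℚ)) := by
        apply (Finset.sum_subset (Finset.subset_univ T) ?_).symm
        intro p _ hp
        rw [hgq]
        simp [dif_neg hp]
      have h4 : ∑ p ∈ T, gq p * ((p.1.2 l : ℚ)) = ∑ i : {p : Idx Δ // p ∈ T}, g i * ((i.1.1.2 l : ℚ)) := by
        rw [← Finset.sum_coe_sort T (fun p => gq p * ((p.1.2 l : ℚ)))]
        apply Finset.sum_congr rfl
        intro i _
        congr 1
        rw [hgq]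
        simp only [dif_pos i.2]
      rw [h3, h4, hsum0, mul_zero]
    have : ((∑ p : Idx Δ, m p • (p.1.2 : Fin r → ℤ)) l : ℤ) = 0 := by exact_mod_cast hQ
    simpa using this

end Main
end Stmt4Aux

namespace Stmt4Aux
open Finset
section Main
variable {r : ℕ} (Δ : Finset (ℂˣ × (Fin r → ℤ)))

lemma suppn_update_same (n : Idx Δ → ℕ) (p : Idx Δ) (v : ℕ) (hv : v ≠ 0)
    (hp : p ∈ suppn Δ n) : suppn Δ (Function.update n p v) = suppn Δ n := by
  classical
  ext q
  rw [mem_suppn_iff, mem_suppn_iff]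
  by_cases hq : q = p
  · subst hq
    rw [mem_suppn_iff] at hp
    simp [hv, hp]
  · rw [Function.update_of_ne hq]

lemma suppn_update_zero (n : Idx Δ → ℕ) (p : Idx Δ) :
    suppn Δ (Function.update n p 0) = (suppn Δ n).erase p := by
  classical
  ext q
  rw [mem_suppn_iff, Finset.mem_erase, mem_suppn_iff]
  by_cases hq : q = p
  · subst hq; simp
  · rw [Function.update_of_ne hq]
    simp [hq]

lemma sum_erase_update (n : Idx Δ → ℕ) (p0 p : Idx Δ) (hne : p ≠ p0) (v : ℕ) :
    ∑ q ∈ Finset.univ.erase p0, (Function.update n p v) q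
      = v + ∑ q ∈ (Finset.univ.erase p0).erase p, n q := by
  classical
  have hp : p ∈ Finset.univ.erase p0 := Finset.mem_erase.mpr ⟨hne, Finset.mem_univ p⟩
  rw [Finset.sum_update_of_mem hp, Finset.sdiff_singleton_eq_erase]

lemma sum_erase_update_p0 (n : Idx Δ → ℕ) (p0 : Idx Δ) (v : ℕ) :
    ∑ q ∈ Finset.univ.erase p0, (Function.update n p0 v) q
      = ∑ q ∈ Finset.univ.erase p0, n q := by
  classical
  apply Finset.sum_congr rfl
  intro q hq
  rw [Function.update_of_ne (Finset.mem_erase.mp hq).1]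

lemma sum_univ_update (n : Idx Δ → ℕ) (p : Idx Δ) (v : ℕ) :
    ∑ q : Idx Δ, (Function.update n p v) q = v + ∑ q ∈ Finset.univ.erase p, n q := by
  classical
  rw [Finset.sum_update_of_mem (Finset.mem_univ p), Finset.sdiff_singleton_eq_erase]

end Main
end Stmt4Aux

namespace Stmt4Aux
open Finset
section Main
variable {r : ℕ} (Δ : Finset (ℂˣ × (Fin r → ℤ)))

local notation "K" => FractionRing (LaurentA r)
local notation "φ" => algebraMap (LaurentA r) (FractionRing (LaurentA r))

set_option maxHeartbeats 2000000 in
theorem key_mem (hΔ : ((1 : ℂˣ), (0 : Fin r → ℤ)) ∉ Δ) (n : Idx Δ → ℕ) : XX Δ n ∈ MM Δ := by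
  classical
  suffices H : ∀ (k : ℕ) (n : Idx Δ → ℕ), (suppn Δ n).card ≤ k → XX Δ n ∈ MM Δ by
    exact H (suppn Δ n).card n le_rfl
  intro k
  induction k with
  | zero =>
    intro n hn
    apply indep_case Δ hΔ
    have hT : suppn Δ n = ∅ := Finset.card_eq_zero.mp (Nat.le_zero.mp hn)
    have hie : (∅ : Finset (Idx Δ)).image Subtype.val = (∅ : Finset (ℂˣ × (Fin r → ℤ))) :=
      Finset.image_empty _
    rw [hT, hie]
    unfold IndepS
    have : IsEmpty {x // x ∈ (∅ : Finset (ℂˣ × (Fin r → ℤ)))} := by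
      constructor
      rintro ⟨x, hx⟩
      exact absurd hx (Finset.notMem_empty x)
    exact linearIndependent_empty_type
  | succ k IH =>
    intro n hn
    by_cases hle : (suppn Δ n).card ≤ k
    · exact IH n hle
    by_cases hind : IndepS ((suppn Δ n).image Subtype.val)
    · exact indep_case Δ hΔ n hind
    set T := suppn Δ n with hT
    have hTcard : T.card = k + 1 := by omega
    obtain ⟨m, hmsupp, ⟨pex, hpex⟩, hrel⟩ := relation_of_dep Δ T hind
    set sZ : Finset (Idx Δ) := Finset.univ.filter (fun p => m p ≠ 0) with hsZ
    have hpexZ : pex ∈ sZ := by rw [hsZ]; simp [hpex]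
    have hsZT : sZ ⊆ T := by
      intro p hp
      rw [hsZ, Finset.mem_filter] at hp
      by_contra hpT
      exact hp.2 (hmsupp p hpT)
    have scalar_eq : ∀ m' : Idx Δ → ℤ, (∀ p, p ∉ sZ → m' p = 0) →
        (∑ p : Idx Δ, m' p • (p.1.2 : Fin r → ℤ)) = 0 →
        (∏ p ∈ sZ, (mono p.1.1 p.1.2 : (LaurentA r)ˣ) ^ (m' p))
          = mono (∏ p ∈ sZ, (p.1.1) ^ (m' p)) 0 := by
      intro m' hm's hm'rel
      rw [mono_prod_zpow]
      congr 1
      rw [← hm'rel]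
      apply Finset.sum_subset (Finset.subset_univ sZ)
      intro p _ hp
      rw [hm's p hp, zero_smul]
    set c : ℂˣ := ∏ p ∈ sZ, (p.1.1) ^ (m p) with hc
    have hm_out : ∀ p, p ∉ sZ → m p = 0 := by
      intro p hp
      by_contra h
      exact hp (by rw [hsZ]; exact Finset.mem_filter.mpr ⟨Finset.mem_univ _, h⟩)
    by_cases hc1 : c = 1
    · -- tool 2 : the scalar is 1
      set p0 := pex with hp0def
      set m2 : Idx Δ → ℤ := if 0 < m pex then m else fun p => -(m p) with hm2
      have hm2p0 : 0 < m2 p0 := by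
        rw [hm2]
        by_cases hpos : 0 < m pex
        · simp only [if_pos hpos]; exact hpos
        · simp only [if_neg hpos]
          have hpexne : m pex ≠ 0 := hpex
          have hpos' : ¬ 0 < m p0 := hpos
          have hpexne' : m p0 ≠ 0 := hpex
          omega
      have hm2out : ∀ p, p ∉ sZ → m2 p = 0 := by
        intro p hp
        rw [hm2]
        by_cases hpos : 0 < m pex
        · simpa [hpos] using hm_out p hp
        · simp only [if_neg hpos]
          rw [hm_out p hp, neg_zero]
      have hrel2 : ∑ p : Idx Δ, m2 p • (p.1.2 : Fin r → ℤ) = 0 := by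
        rw [hm2]
        by_cases hpos : 0 < m pex
        · simpa [hpos] using hrel
        · simp only [if_neg hpos]
          have h1 : ∑ p : Idx Δ, (-(m p)) • (p.1.2 : Fin r → ℤ)
              = -∑ p : Idx Δ, m p • (p.1.2 : Fin r → ℤ) := by
            rw [← Finset.sum_neg_distrib]
            apply Finset.sum_congr rfl
            intro p _
            rw [neg_smul]
          rw [h1, hrel, neg_zero]
      have hc2 : (∏ p ∈ sZ, (p.1.1) ^ (m2 p)) = 1 := by
        rw [hm2]
        by_cases hpos : 0 < m pex
        · simp only [if_pos hpos]
          rw [← hc]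
          exact hc1
        · simp only [if_neg hpos]
          have h1 : ∏ p ∈ sZ, (p.1.1) ^ (-(m p)) = (∏ p ∈ sZ, (p.1.1) ^ (m p))⁻¹ := by
            rw [← Finset.prod_inv_distrib]
            apply Finset.prod_congr rfl
            intro p _
            rw [zpow_neg]
          rw [h1, ← hc, hc1, inv_one]
      have hprodU2 : (∏ p ∈ sZ, (mono p.1.1 p.1.2 : (LaurentA r)ˣ) ^ (m2 p)) = 1 := by
        rw [scalar_eq m2 hm2out hrel2, hc2, mono_one]
      have hp0Z : p0 ∈ sZ := hpexZ
      have hVid : (mono p0.1.1 p0.1.2 : (LaurentA r)ˣ) ^ (m2 p0)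
          = ∏ p ∈ sZ.erase p0, (mono p.1.1 p.1.2 : (LaurentA r)ˣ) ^ (-(m2 p)) := by
        have h1 := Finset.mul_prod_erase sZ
          (fun p => (mono p.1.1 p.1.2 : (LaurentA r)ˣ) ^ (m2 p)) hp0Z
        have h2 : (mono p0.1.1 p0.1.2 : (LaurentA r)ˣ) ^ (m2 p0)
            * ∏ p ∈ sZ.erase p0, (mono p.1.1 p.1.2 : (LaurentA r)ˣ) ^ (m2 p) = 1 := by
          rw [h1, hprodU2]
        rw [mul_eq_one_iff_eq_inv] at h2
        rw [h2, ← Finset.prod_inv_distrib]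
        apply Finset.prod_congr rfl
        intro p _
        rw [zpow_neg]
      obtain ⟨hco, hhco⟩ := one_sub_prod_zpow (sZ.erase p0)
        (fun p => (mono p.1.1 p.1.2 : (LaurentA r)ˣ)) (fun p => -(m2 p))
      rw [← hVid] at hhco
      set m0 : ℕ := (m2 p0).toNat with hm0
      have hm0pos : 0 < m0 := by rw [hm0]; omega
      set b0 : LaurentA r := ((mono p0.1.1 p0.1.2 : (LaurentA r)ˣ) : LaurentA r) with hb0
      have hvalpow : (((mono p0.1.1 p0.1.2 : (LaurentA r)ˣ) ^ (m2 p0) : (LaurentA r)ˣ) : LaurentA r)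
          = b0 ^ m0 := by
        have hmm : m2 p0 = (m0 : ℤ) := by rw [hm0]; omega
        rw [hmm, zpow_natCast, Units.val_pow_eq_pow_val, hb0]
      set g : LaurentA r := ∑ i ∈ Finset.range m0, b0 ^ i with hg
      have huu0 : uu p0.1 = 1 - b0 := rfl
      have hMI : uu p0.1 * g = ∑ p ∈ sZ.erase p0, uu p.1 * hco p := by
        have h1 : uu p0.1 * g = 1 - b0 ^ m0 := by
          rw [huu0, hg, ← one_sub_pow_eq]
        rw [h1, ← hvalpow, hhco]
        apply Finset.sum_congr rfl
        intro p _
        rfl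
      have hWt : ∃ W : LaurentA r, g = (m0 : LaurentA r) - uu p0.1 * W := by
        refine ⟨∑ i ∈ Finset.range m0, ∑ j ∈ Finset.range i, b0 ^ j, ?_⟩
        have h2 : ∑ i ∈ Finset.range m0, ((1 : LaurentA r) - b0 ^ i)
            = (1 - b0) * ∑ i ∈ Finset.range m0, ∑ j ∈ Finset.range i, b0 ^ j := by
          rw [Finset.mul_sum]
          exact Finset.sum_congr rfl (fun i _ => one_sub_pow_eq b0 i)
        have h3 : ∑ i ∈ Finset.range m0, ((1 : LaurentA r) - b0 ^ i)
            = (m0 : LaurentA r) - ∑ i ∈ Finset.range m0, b0 ^ i := by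
          rw [Finset.sum_sub_distrib, Finset.sum_const, Finset.card_range, nsmul_eq_mul, mul_one]
        rw [hg, huu0]
        linear_combination h3 - h2
      obtain ⟨W, hW⟩ := hWt
      set β : LaurentA r := algebraMap ℂ (LaurentA r) (((m0 : ℂ))⁻¹) with hβ
      have hβm0 : β * (m0 : LaurentA r) = 1 := by
        have hcast : ((m0 : LaurentA r)) = algebraMap ℂ (LaurentA r) ((m0 : ℂ)) := by
          rw [map_natCast]
        rw [hβ, hcast, ← map_mul]
        have : ((m0 : ℂ))⁻¹ * (m0 : ℂ) = 1 := by
          apply inv_mul_cancel₀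
          exact Nat.cast_ne_zero.mpr (by omega)
        rw [this, map_one]
      have hcop : β * g + (β * W) * uu p0.1 = 1 := by
        rw [hW]
        linear_combination hβm0
      have hp0T : p0 ∈ T := hsZT hp0Z
      have inner : ∀ (μ : ℕ) (j : ℕ) (n' : Idx Δ → ℕ), suppn Δ n' = T →
          (∑ q ∈ Finset.univ.erase p0, n' q) = μ → n' p0 = j → XX Δ n' ∈ MM Δ := by
        intro μ
        induction μ using Nat.strong_induction_on with
        | _ μ IHμ =>
        intro j
        induction j using Nat.strong_induction_on with
        | _ j IHj =>
        intro n' hs hμ hj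
        have hn'p0 : n' p0 ≠ 0 := by rw [← mem_suppn_iff Δ n' p0, hs]; exact hp0T
        have hsplit : XX Δ n' = φ (β * g) * XX Δ n' + φ ((β * W) * uu p0.1) * XX Δ n' := by
          rw [← add_mul, ← map_add, hcop, map_one, one_mul]
        rw [hsplit]
        apply Submodule.add_mem
        · set nup := Function.update n' p0 (n' p0 + 1) with hnup
          have hXnup : XX Δ n' = φ (uu p0.1) * XX Δ nup := (XX_up Δ hΔ n' p0).symm
          have ht1 : φ (β * g) * XX Δ n'
              = ∑ p ∈ sZ.erase p0, φ (β * hco p) * XX Δ (Function.update nup p (nup p - 1)) := by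
            rw [hXnup]
            calc φ (β * g) * (φ (uu p0.1) * XX Δ nup)
                = φ β * (φ (uu p0.1 * g) * XX Δ nup) := by
                  simp only [map_mul]; ring
              _ = φ β * (φ (∑ p ∈ sZ.erase p0, uu p.1 * hco p) * XX Δ nup) := by rw [hMI]
              _ = ∑ p ∈ sZ.erase p0, φ β * (φ (uu p.1 * hco p) * XX Δ nup) := by
                  rw [map_sum, Finset.sum_mul, Finset.mul_sum]
              _ = ∑ p ∈ sZ.erase p0, φ (β * hco p) * XX Δ (Function.update nup p (nup p - 1)) := by
                  apply Finset.sum_congr rfl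
                  intro p hp
                  have hpp0 : p ≠ p0 := (Finset.mem_erase.mp hp).1
                  have hpZ : p ∈ sZ := (Finset.mem_erase.mp hp).2
                  have hnupp : nup p ≠ 0 := by
                    rw [hnup, Function.update_of_ne hpp0]
                    rw [← mem_suppn_iff Δ n' p, hs]
                    exact hsZT hpZ
                  calc φ β * (φ (uu p.1 * hco p) * XX Δ nup)
                      = φ (β * hco p) * (φ (uu p.1) * XX Δ nup) := by
                        simp only [map_mul]; ring
                    _ = φ (β * hco p) * XX Δ (Function.update nup p (nup p - 1)) := by
                        rw [XX_down Δ hΔ nup p hnupp]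
          rw [ht1]
          apply Submodule.sum_mem
          intro p hp
          apply MM_mul_mem
          have hpp0 : p ≠ p0 := (Finset.mem_erase.mp hp).1
          have hpZ : p ∈ sZ := (Finset.mem_erase.mp hp).2
          have hpT : p ∈ T := hsZT hpZ
          have hn'p : n' p ≠ 0 := by rw [← mem_suppn_iff Δ n' p, hs]; exact hpT
          have hnupp_val : nup p = n' p := by rw [hnup, Function.update_of_ne hpp0]
          have hsupp_nup : suppn Δ nup = T := by
            rw [hnup, suppn_update_same Δ n' p0 _ (by omega) (by rw [hs]; exact hp0T), hs]
          by_cases h1 : n' p = 1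
          · apply IH
            have heq0 : Function.update nup p (nup p - 1) = Function.update nup p 0 := by
              rw [hnupp_val, h1]
            rw [heq0, suppn_update_zero, hsupp_nup, Finset.card_erase_of_mem hpT, hTcard]
            omega
          · have hsupp2 : suppn Δ (Function.update nup p (nup p - 1)) = T := by
              rw [suppn_update_same Δ nup p _ (by rw [hnupp_val]; omega)
                (by rw [hsupp_nup]; exact hpT), hsupp_nup]
            have hpmem : p ∈ Finset.univ.erase p0 :=
              Finset.mem_erase.mpr ⟨hpp0, Finset.mem_univ p⟩
            have hdecomp : nup p + ∑ q ∈ (Finset.univ.erase p0).erase p, nup q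
                = ∑ q ∈ Finset.univ.erase p0, nup q :=
              Finset.add_sum_erase _ _ hpmem
            have hμ1 : ∑ q ∈ Finset.univ.erase p0, nup q = μ := by
              rw [hnup, sum_erase_update_p0, hμ]
            have hupdsum := sum_erase_update Δ nup p0 p hpp0 (nup p - 1)
            have hμlt : ∑ q ∈ Finset.univ.erase p0, (Function.update nup p (nup p - 1)) q < μ := by
              rw [hupdsum]
              have : nup p ≠ 0 := by rw [hnupp_val]; exact hn'p
              omega
            refine IHμ _ hμlt (nup p0) _ hsupp2 rfl ?_
            rw [Function.update_of_ne (Ne.symm hpp0)]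
        · have ht2 : φ ((β * W) * uu p0.1) * XX Δ n'
              = φ (β * W) * XX Δ (Function.update n' p0 (n' p0 - 1)) := by
            rw [map_mul, mul_assoc, XX_down Δ hΔ n' p0 hn'p0]
          rw [ht2]
          apply MM_mul_mem
          by_cases h1 : n' p0 = 1
          · apply IH
            have heq0 : Function.update n' p0 (n' p0 - 1) = Function.update n' p0 0 := by
              rw [h1]
            rw [heq0, suppn_update_zero, hs, Finset.card_erase_of_mem hp0T, hTcard]
            omega
          · have hsupp2 : suppn Δ (Function.update n' p0 (n' p0 - 1)) = T := by
              rw [suppn_update_same Δ n' p0 _ (by omega) (by rw [hs]; exact hp0T), hs]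
            have hsum2 : ∑ q ∈ Finset.univ.erase p0, (Function.update n' p0 (n' p0 - 1)) q = μ := by
              rw [sum_erase_update_p0, hμ]
            refine IHj (j - 1) (by omega) _ hsupp2 hsum2 ?_
            rw [Function.update_self]
            omega
      exact inner (∑ q ∈ Finset.univ.erase p0, n q) (n p0) n hT.symm rfl rfl
    · -- tool 1 : the scalar is not 1
      obtain ⟨hco, hhco⟩ := one_sub_prod_zpow sZ
        (fun p => (mono p.1.1 p.1.2 : (LaurentA r)ˣ)) m
      rw [scalar_eq m hm_out hrel] at hhco
      have hcne : (1 : ℂ) - (c : ℂ) ≠ 0 := by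
        intro h0
        apply hc1
        apply Units.ext
        rw [Units.val_one]
        exact (sub_eq_zero.mp h0).symm
      set β0 : LaurentA r := AddMonoidAlgebra.single (0 : Fin r → ℤ) (((1 : ℂ) - (c : ℂ))⁻¹)
        with hβ0
      have hone2 : (1 : LaurentA r) = ∑ p ∈ sZ, uu p.1 * (β0 * hco p) := by
        have hval : ((mono c 0 : (LaurentA r)ˣ) : LaurentA r)
            = AddMonoidAlgebra.single (0 : Fin r → ℤ) ((c : ℂ)) := mono_val c 0
        have hsub : (1 : LaurentA r) - ((mono c 0 : (LaurentA r)ˣ) : LaurentA r)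
            = AddMonoidAlgebra.single (0 : Fin r → ℤ) ((1 : ℂ) - (c : ℂ)) := by
          rw [hval, AddMonoidAlgebra.one_def]
          exact (AddMonoidAlgebra.single_sub _ _ _).symm
        have hβmul : β0 * AddMonoidAlgebra.single (0 : Fin r → ℤ) ((1 : ℂ) - (c : ℂ))
            = (1 : LaurentA r) := by
          rw [hβ0, AddMonoidAlgebra.single_mul_single, add_zero, inv_mul_cancel₀ hcne,
            AddMonoidAlgebra.one_def]
        calc (1 : LaurentA r)
            = β0 * AddMonoidAlgebra.single (0 : Fin r → ℤ) ((1 : ℂ) - (c : ℂ)) := hβmul.symm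
          _ = β0 * ((1 : LaurentA r) - ((mono c 0 : (LaurentA r)ˣ) : LaurentA r)) := by
              rw [hsub]
          _ = β0 * ∑ p ∈ sZ, (1 - ((mono p.1.1 p.1.2 : (LaurentA r)ˣ) : LaurentA r)) * hco p := by
              rw [hhco]
          _ = ∑ p ∈ sZ, uu p.1 * (β0 * hco p) := by
              rw [Finset.mul_sum]
              apply Finset.sum_congr rfl
              intro p _
              rw [uu_eq_one_sub_mono]
              ring
      have inner : ∀ (N : ℕ) (n' : Idx Δ → ℕ), suppn Δ n' = T → (∑ q : Idx Δ, n' q) = N →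
          XX Δ n' ∈ MM Δ := by
        intro N
        induction N using Nat.strong_induction_on with
        | _ N IH2 =>
        intro n' hs hN
        have hXeq : XX Δ n'
            = ∑ p ∈ sZ, φ (β0 * hco p) * XX Δ (Function.update n' p (n' p - 1)) := by
          have h0 : XX Δ n' = φ (1 : LaurentA r) * XX Δ n' := by rw [map_one, one_mul]
          rw [h0, hone2, map_sum, Finset.sum_mul]
          apply Finset.sum_congr rfl
          intro p hp
          have hnp : n' p ≠ 0 := by
            rw [← mem_suppn_iff Δ n' p, hs]
            exact hsZT hp
          calc φ (uu p.1 * (β0 * hco p)) * XX Δ n'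
              = φ (β0 * hco p) * (φ (uu p.1) * XX Δ n') := by
                simp only [map_mul]; ring
            _ = φ (β0 * hco p) * XX Δ (Function.update n' p (n' p - 1)) := by
                rw [XX_down Δ hΔ n' p hnp]
        rw [hXeq]
        apply Submodule.sum_mem
        intro p hp
        apply MM_mul_mem
        have hnp : n' p ≠ 0 := by
          rw [← mem_suppn_iff Δ n' p, hs]
          exact hsZT hp
        have hpT : p ∈ T := hsZT hp
        by_cases h1 : n' p = 1
        · apply IH
          have heq0 : Function.update n' p (n' p - 1) = Function.update n' p 0 := by rw [h1]
          rw [heq0, suppn_update_zero, hs, Finset.card_erase_of_mem hpT, hTcard]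
          omega
        · have hsupp2 : suppn Δ (Function.update n' p (n' p - 1)) = T := by
            rw [suppn_update_same Δ n' p _ (by omega) (by rw [hs]; exact hpT), hs]
          refine IH2 _ ?_ _ hsupp2 rfl
          rw [sum_univ_update]
          have hdec : n' p + ∑ q ∈ Finset.univ.erase p, n' q = ∑ q : Idx Δ, n' q :=
            Finset.add_sum_erase _ _ (Finset.mem_univ p)
          omega
      exact inner (∑ q : Idx Δ, n q) n hT.symm rfl

end Main
end Stmt4Aux



/-- **Corollary to Proposition 3.2: `R = R_r`.** For a finite `Δ ⊂ ℂˣ × ℤ^r` with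
`(1,0) ∉ Δ` and `d = ∏_{(a,χ)∈Δ}(1 − a e^χ)`, the element `d` is nonzero and every element
`f/dⁿ` of the fraction field can be written as a finite sum `Σⱼ gⱼ/d_{Sⱼ}^{nⱼ}` where each
`Sⱼ ⊆ Δ` has projection to `ℤ^r` consisting of linearly independent vectors; i.e. the
localization `A[d⁻¹]` equals `Σ_S A[d_S⁻¹]`. -/
theorem stmt4 {r : ℕ} (Δ : Finset (ℂˣ × (Fin r → ℤ)))
    (hΔ : ((1 : ℂˣ), (0 : Fin r → ℤ)) ∉ Δ)
    (d : LaurentA r)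
    (hd : d = ∏ p ∈ Δ, ((1 : LaurentA r) - AddMonoidAlgebra.single p.2 ((p.1 : ℂ)))) :
    d ≠ 0 ∧
    ∀ (f : LaurentA r) (n : ℕ),
      ∃ (m : ℕ) (S : Fin m → Finset (ℂˣ × (Fin r → ℤ)))
        (g : Fin m → LaurentA r) (e : Fin m → ℕ),
        (∀ j, S j ⊆ Δ) ∧
        (∀ j, LinearIndependent ℚ
          (fun (p : {x // x ∈ S j}) (l : Fin r) => ((p.1.2 l : ℚ)))) ∧
        algebraMap (LaurentA r) (FractionRing (LaurentA r)) f *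
            ((algebraMap (LaurentA r) (FractionRing (LaurentA r)) d) ^ n)⁻¹ =
          ∑ j, algebraMap (LaurentA r) (FractionRing (LaurentA r)) (g j) *
            ((algebraMap (LaurentA r) (FractionRing (LaurentA r))
              (∏ p ∈ S j, ((1 : LaurentA r) - AddMonoidAlgebra.single p.2 ((p.1 : ℂ))))) ^ (e j))⁻¹ := by
  classical
  open Stmt4Aux in
  constructor
  · rw [hd]
    apply Finset.prod_ne_zero_iff.mpr
    intro p hp
    exact Stmt4Aux.uu_ne_zero Δ hΔ hp
  · intro f n
    have hdprod : d = ∏ p : Stmt4Aux.Idx Δ, Stmt4Aux.uu p.1 := by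
      rw [hd]
      rw [show (∏ p ∈ Δ, ((1 : LaurentA r) - AddMonoidAlgebra.single p.2 ((p.1 : ℂ))))
          = ∏ p ∈ Δ, Stmt4Aux.uu p from Finset.prod_congr rfl (fun p _ => rfl)]
      exact (Finset.prod_coe_sort Δ (fun p => Stmt4Aux.uu p)).symm
    have hDD : Stmt4Aux.DD Δ (fun _ => n) = d ^ n := by
      unfold Stmt4Aux.DD
      rw [hdprod, ← Finset.prod_pow]
    set φ' := algebraMap (LaurentA r) (FractionRing (LaurentA r)) with hφ'
    have hXX : φ' f * ((φ' d) ^ n)⁻¹ = φ' f * Stmt4Aux.XX Δ (fun _ => n) := by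
      unfold Stmt4Aux.XX
      rw [hDD, map_pow]
    have hmem : φ' f * Stmt4Aux.XX Δ (fun _ => n) ∈ Stmt4Aux.MM Δ :=
      Stmt4Aux.MM_mul_mem Δ f (Stmt4Aux.key_mem Δ hΔ (fun _ => n))
    rw [Stmt4Aux.MM] at hmem
    obtain ⟨mN, coefs, gens, hsum⟩ := Submodule.mem_span_set'.mp hmem
    choose Sj ej hSj hIj hxj using fun j => (gens j).2
    refine ⟨mN, Sj, coefs, ej, hSj, fun j => hIj j, ?_⟩
    rw [hXX, ← hsum]
    apply Finset.sum_congr rfl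
    intro j _
    rw [Algebra.smul_def, ← hxj j]
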